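/- Let m ≥ 1, let γ_m denote the standard Gaussian measure on ℝ^m, and fix μ ∈ ℝ^m, a matrix C ∈ ℝ^{m×m}, a vector w ∈ ℝ^m, and a threshold f* ∈ ℝ. Set Δ = wᵀμ − f* and σ = ‖Cᵀw‖ (the Euclidean norm of Cᵀw), and assume σ > 0. Then ∫ max(wᵀ(μ + C z) − f*, 0) dγ_m(z) = Δ·Φ(Δ/σ) + σ·φ(Δ/σ). (This is Proposition 2 of the paper: the expected improvement for composite functions admits a closed form when the outer function g(y) = wᵀy is linear.) -/

import Mathlib

open MeasureTheory ProbabilityTheory Matrix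

/-- The standard Gaussian measure on `ℝ^m`, i.e. the `m`-fold product of `N(0,1)`. -/
noncomputable def stdGaussianE (m : ℕ) : Measure (EuclideanSpace ℝ (Fin m)) :=
  (Measure.pi fun _ : Fin m => gaussianReal 0 1).map (MeasurableEquiv.toLp 2 (Fin m → ℝ))

/-- The standard normal probability density function `φ`. -/
noncomputable def stdNormalPDF (x : ℝ) : ℝ :=
  (Real.sqrt (2 * Real.pi))⁻¹ * Real.exp (-x ^ 2 / 2)

/-- The standard normal cumulative distribution function `Φ`. -/
noncomputable def stdNormalCDF (x : ℝ) : ℝ :=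
  ((gaussianReal 0 1) (Set.Iic x)).toReal

section Helpers
open Real
open scoped NNReal ENNReal

lemma conv_pdf (u v : ℝ≥0) (hu : u ≠ 0) (hv : v ≠ 0) (t : ℝ) :
    ∫ x, gaussianPDFReal 0 u x * gaussianPDFReal t v x = gaussianPDFReal 0 (u + v) t := by
  have hu' : (0:ℝ) < u := lt_of_le_of_ne u.coe_nonneg (by exact_mod_cast (Ne.symm hu))
  have hv' : (0:ℝ) < v := lt_of_le_of_ne v.coe_nonneg (by exact_mod_cast (Ne.symm hv))
  set b : ℝ := ((u:ℝ) + v) / (2 * u * v) with hb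
  have hbpos : 0 < b := by positivity
  set c : ℝ := (u:ℝ) * t / ((u:ℝ) + v) with hc
  have key : ∀ x : ℝ, gaussianPDFReal 0 u x * gaussianPDFReal t v x
      = ((√(2*π*u))⁻¹ * (√(2*π*v))⁻¹ * rexp (-t^2/(2*((u:ℝ)+v)))) * rexp (-b * (x - c)^2) := by
    intro x
    have hexp : -x^2/(2*(u:ℝ)) + -(x-t)^2/(2*(v:ℝ))
        = -t^2/(2*((u:ℝ)+v)) + -(b*(x-c)^2) := by
      rw [hb, hc]; field_simp; ring
    simp only [gaussianPDFReal, sub_zero]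
    rw [mul_mul_mul_comm, ← Real.exp_add, hexp, Real.exp_add]
    ring
  simp_rw [key]
  rw [integral_const_mul, integral_sub_right_eq_self (fun a => rexp (-b * a^2)) c,
    integral_gaussian]
  show (√(2*π*↑u))⁻¹ * (√(2*π*↑v))⁻¹ * rexp (-t ^ 2 / (2 * (↑u + ↑v))) * √(π / b)
      = gaussianPDFReal 0 (u+v) t
  simp only [gaussianPDFReal, sub_zero, NNReal.coe_add]
  rw [mul_comm _ (√(π/b)), ← mul_assoc, ← mul_assoc]
  congr 1
  rw [← Real.sqrt_inv, ← Real.sqrt_inv, ← Real.sqrt_inv,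
    ← Real.sqrt_mul (by positivity), ← Real.sqrt_mul (by positivity)]
  congr 1
  rw [hb]
  field_simp

lemma measurable_gpdf2 (v : ℝ≥0) : Measurable fun p : ℝ × ℝ => gaussianPDF p.1 v p.2 := by
  simp only [gaussianPDF, gaussianPDFReal]
  apply Measurable.ennreal_ofReal
  fun_prop

lemma gaussianPDFReal_symm (v : ℝ≥0) (x t : ℝ) :
    gaussianPDFReal x v t = gaussianPDFReal t v x := by
  simp only [gaussianPDFReal]
  rw [show (t - x)^2 = (x - t)^2 by ring]

lemma gauss_conv (u v : ℝ≥0) :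
    ((gaussianReal 0 u).prod (gaussianReal 0 v)).map (fun p => p.1 + p.2)
      = gaussianReal 0 (u + v) := by
  rcases eq_or_ne u 0 with rfl | hu
  · rw [gaussianReal_zero_var, Measure.dirac_prod, zero_add,
      Measure.map_map (by fun_prop) (by fun_prop)]
    simp [Function.comp_def]
  rcases eq_or_ne v 0 with rfl | hv
  · rw [gaussianReal_zero_var, Measure.prod_dirac, add_zero,
      Measure.map_map (by fun_prop) (by fun_prop)]
    simp [Function.comp_def]
  have huv : u + v ≠ 0 := by positivity
  have hadd : Measurable fun p : ℝ × ℝ => p.1 + p.2 := by fun_prop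
  rw [gaussianReal_of_var_ne_zero 0 huv]
  ext s hs
  rw [Measure.map_apply hadd hs, withDensity_apply _ hs]
  have hps : MeasurableSet ((fun p : ℝ × ℝ => p.1 + p.2) ⁻¹' s) := hadd hs
  rw [Measure.prod_apply hps]
  have h1 : ∀ x : ℝ, gaussianReal 0 v (Prod.mk x ⁻¹' ((fun p : ℝ × ℝ => p.1 + p.2) ⁻¹' s))
      = ∫⁻ t in s, gaussianPDF x v t := by
    intro x
    have : Prod.mk x ⁻¹' ((fun p : ℝ × ℝ => p.1 + p.2) ⁻¹' s) = (fun y => x + y) ⁻¹' s := rfl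
    rw [this, ← Measure.map_apply (by fun_prop) hs, gaussianReal_map_const_add, zero_add,
      gaussianReal_apply _ hv s]
  simp_rw [h1]
  rw [gaussianReal_of_var_ne_zero 0 hu,
    lintegral_withDensity_eq_lintegral_mul _ (measurable_gaussianPDF 0 u)
      (by exact ((measurable_gpdf2 v).lintegral_prod_right'))]
  simp only [Pi.mul_apply]
  have hmeas : AEMeasurable (fun p : ℝ × ℝ => gaussianPDF 0 u p.1 * gaussianPDF p.1 v p.2)
      (Measure.prod volume (volume.restrict s)) := by
    exact (((measurable_gaussianPDF 0 u).comp measurable_fst).mul (measurable_gpdf2 v)).aemeasurable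
  calc ∫⁻ a, gaussianPDF 0 u a * ∫⁻ t in s, gaussianPDF a v t
      = ∫⁻ a, ∫⁻ t in s, gaussianPDF 0 u a * gaussianPDF a v t := by
        congr 1; ext a; rw [lintegral_const_mul _ (measurable_gaussianPDF a v)]
    _ = ∫⁻ t in s, ∫⁻ a, gaussianPDF 0 u a * gaussianPDF a v t := by
        exact lintegral_lintegral_swap hmeas
    _ = ∫⁻ t in s, gaussianPDF 0 (u + v) t := by
        apply lintegral_congr
        intro t
        have hint : Integrable (fun a => gaussianPDFReal 0 u a * gaussianPDFReal t v a) := by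
          apply (integrable_gaussianPDFReal t v).bdd_mul (c := (√(2*π*u))⁻¹)
            (stronglyMeasurable_gaussianPDFReal 0 u).aestronglyMeasurable
          refine ae_of_all _ fun a => ?_
          rw [Real.norm_eq_abs, abs_of_nonneg (gaussianPDFReal_nonneg 0 u a), gaussianPDFReal]
          have : rexp (-(a - 0)^2 / (2*u)) ≤ 1 := by
            rw [Real.exp_le_one_iff]
            have : (0:ℝ) < 2 * u := by positivity
            apply div_nonpos_of_nonpos_of_nonneg <;> [skip; positivity]
            simp [neg_nonpos, sq_nonneg]
          calc (√(2*π*u))⁻¹ * rexp (-(a-0)^2/(2*u)) ≤ (√(2*π*u))⁻¹ * 1 := by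
                apply mul_le_mul_of_nonneg_left this (by positivity)
            _ = (√(2*π*u))⁻¹ := mul_one _
        calc ∫⁻ a, gaussianPDF 0 u a * gaussianPDF a v t
            = ∫⁻ a, ENNReal.ofReal (gaussianPDFReal 0 u a * gaussianPDFReal t v a) := by
              apply lintegral_congr; intro a
              rw [gaussianPDF, gaussianPDF, gaussianPDFReal_symm v a t,
                ENNReal.ofReal_mul (gaussianPDFReal_nonneg 0 u a)]
          _ = ENNReal.ofReal (∫ a, gaussianPDFReal 0 u a * gaussianPDFReal t v a) := by
              rw [← ofReal_integral_eq_lintegral_ofReal hint]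
              exact ae_of_all _ fun a =>
                mul_nonneg (gaussianPDFReal_nonneg 0 u a) (gaussianPDFReal_nonneg t v a)
          _ = gaussianPDF 0 (u + v) t := by rw [conv_pdf u v hu hv t, gaussianPDF]

lemma pi_map_sum : ∀ (n : ℕ) (v : Fin n → ℝ) (s : ℝ≥0), ((s:ℝ) = ∑ i, v i ^ 2) →
    (Measure.pi fun _ : Fin n => gaussianReal 0 1).map (fun z => ∑ i, v i * z i)
      = gaussianReal 0 s := by
  intro n
  induction n with
  | zero =>
    intro v s hs
    have hs0 : s = 0 := by
      ext; simp [hs]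
    simp only [Finset.univ_eq_empty, Finset.sum_empty, hs0, gaussianReal_zero_var]
    rw [Measure.map_const]
    simp
  | succ n ih =>
    intro v s hs
    set γ : Measure ℝ := gaussianReal 0 1 with hγ
    have hmp := measurePreserving_piFinSuccAbove (fun _ : Fin (n+1) => γ) 0
    set e := MeasurableEquiv.piFinSuccAbove (fun _ : Fin (n+1) => ℝ) 0 with he
    have hpi : (Measure.pi fun _ : Fin (n+1) => γ)
        = (γ.prod (Measure.pi fun _ : Fin n => γ)).map e.symm := by
      rw [← hmp.map_eq, Measure.map_map e.symm.measurable e.measurable]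
      simp
    rw [hpi, Measure.map_map (by fun_prop) e.symm.measurable]
    have hcomp : ((fun z : Fin (n+1) → ℝ => ∑ i, v i * z i) ∘ e.symm)
        = fun p : ℝ × (Fin n → ℝ) => v 0 * p.1 + ∑ i, v i.succ * p.2 i := by
      ext p
      simp only [Function.comp_apply, he, MeasurableEquiv.piFinSuccAbove_symm_apply]
      rw [Fin.sum_univ_succ, ← Fin.succAbove_zero]
      simp
    rw [hcomp]
    set s' : ℝ≥0 := ⟨∑ i : Fin n, v i.succ ^ 2, by positivity⟩ with hs'
    have hihs : (Measure.pi fun _ : Fin n => γ).map (fun z => ∑ i, v i.succ * z i)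
        = gaussianReal 0 s' := ih _ s' rfl
    have hmul : γ.map (fun x => v 0 * x) = gaussianReal 0 (NNReal.mk (v 0 ^ 2) (sq_nonneg _) * 1) := by
      rw [hγ, gaussianReal_map_const_mul, mul_zero]
    have hsplit : (fun p : ℝ × (Fin n → ℝ) => v 0 * p.1 + ∑ i, v i.succ * p.2 i)
        = (fun q : ℝ × ℝ => q.1 + q.2) ∘
          (Prod.map (fun x => v 0 * x) (fun z => ∑ i, v i.succ * z i)) := rfl
    rw [hsplit, ← Measure.map_map (by fun_prop) (by fun_prop),
      ← Measure.map_prod_map _ _ (by fun_prop) (by fun_prop), hmul, hihs, gauss_conv]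
    congr 1
    ext
    push_cast
    rw [hs, Fin.sum_univ_succ, mul_one]
    rfl

lemma pdf_eq_std (x : ℝ) : gaussianPDFReal 0 1 x = stdNormalPDF x := by
  simp [gaussianPDFReal, stdNormalPDF]

lemma integrable_std : Integrable stdNormalPDF := by
  have := integrable_gaussianPDFReal 0 1
  simpa [funext pdf_eq_std] using this

lemma integrable_mul_std : Integrable (fun x => x * stdNormalPDF x) := by
  have h : (fun x => x * stdNormalPDF x)
      = fun x => (√(2*π))⁻¹ * (x * rexp (-(1/2) * x^2)) := by
    ext x
    simp only [stdNormalPDF]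
    ring_nf
  rw [h]
  exact (integrable_mul_exp_neg_mul_sq (by norm_num : (0:ℝ) < 1/2)).const_mul _

lemma deriv_negexp (x : ℝ) :
    HasDerivAt (fun x => -rexp (-x^2/2)) (x * rexp (-x^2/2)) x := by
  have h1 : HasDerivAt (fun x : ℝ => -x^2/2) (-x) x := by
    have := ((hasDerivAt_pow 2 x).div_const 2).fun_neg
    exact (this.congr_deriv (by norm_num)).congr_of_eventuallyEq
      (Filter.Eventually.of_forall fun y => by ring)
  have h2 := (h1.exp).fun_neg
  exact h2.congr_deriv (by ring)

lemma tendsto_negexp : Filter.Tendsto (fun x : ℝ => -rexp (-x^2/2)) Filter.atTop (nhds 0) := by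
  have h3 : Filter.Tendsto (fun x : ℝ => x^2/2) Filter.atTop Filter.atTop :=
    (Filter.tendsto_pow_atTop two_ne_zero).atTop_div_const (by norm_num)
  have h4 : Filter.Tendsto (fun x : ℝ => -x^2/2) Filter.atTop Filter.atBot := by
    simp only [neg_div]
    exact Filter.tendsto_neg_atBot_iff.mpr h3
  have := (Real.tendsto_exp_atBot.comp h4).neg
  simpa using this

lemma integral_Ici_mul_std (a : ℝ) :
    ∫ x in Set.Ici a, x * stdNormalPDF x = stdNormalPDF a := by
  have hint : IntegrableOn (fun x => x * rexp (-x^2/2)) (Set.Ioi a) := by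
    have h : (fun x : ℝ => x * rexp (-x^2/2)) = fun x => x * rexp (-(1/2) * x^2) := by
      ext x; ring_nf
    rw [h]
    exact (integrable_mul_exp_neg_mul_sq (by norm_num : (0:ℝ) < 1/2)).integrableOn
  have key : ∫ x in Set.Ioi a, x * rexp (-x^2/2) = rexp (-a^2/2) := by
    have := integral_Ioi_of_hasDerivAt_of_tendsto' (f := fun x => -rexp (-x^2/2))
      (fun x _ => deriv_negexp x) hint tendsto_negexp
    rw [this]; ring
  rw [MeasureTheory.integral_Ici_eq_integral_Ioi]
  calc ∫ x in Set.Ioi a, x * stdNormalPDF x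
      = ∫ x in Set.Ioi a, (√(2*π))⁻¹ * (x * rexp (-x^2/2)) := by
        apply setIntegral_congr_fun (measurableSet_Ioi)
        intro x _; simp only [stdNormalPDF]; ring
    _ = (√(2*π))⁻¹ * ∫ x in Set.Ioi a, x * rexp (-x^2/2) := integral_const_mul _ _
    _ = stdNormalPDF a := by rw [key, stdNormalPDF]

lemma gauss_symm : (gaussianReal 0 1).map (fun x : ℝ => -1 * x) = gaussianReal 0 1 := by
  rw [gaussianReal_map_const_mul]
  norm_num

lemma integral_Ici_std (a : ℝ) :
    ∫ x in Set.Ici a, stdNormalPDF x = stdNormalCDF (-a) := by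
  have h1 : (gaussianReal 0 1) (Set.Iic (-a)) = (gaussianReal 0 1) (Set.Ici a) := by
    conv_lhs => rw [← gauss_symm]
    rw [Measure.map_apply (by fun_prop) measurableSet_Iic]
    congr 1
    ext x
    simp [neg_le]
  rw [stdNormalCDF, h1, gaussianReal_apply_eq_integral 0 one_ne_zero,
    ENNReal.toReal_ofReal (setIntegral_nonneg measurableSet_Ici
      (fun x _ => gaussianPDFReal_nonneg 0 1 x))]
  exact (setIntegral_congr_fun measurableSet_Ici (fun x _ => (pdf_eq_std x))).symm

lemma one_dim (Δ σ : ℝ) (hσ : 0 < σ) :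
    ∫ x, max (Δ + σ * x) 0 ∂(gaussianReal 0 1)
      = Δ * stdNormalCDF (Δ / σ) + σ * stdNormalPDF (Δ / σ) := by
  set a : ℝ := -(Δ/σ) with ha
  rw [gaussianReal_of_var_ne_zero 0 one_ne_zero]
  rw [show gaussianPDF 0 1 = fun x => ((Real.toNNReal (gaussianPDFReal 0 1 x) : ℝ≥0) : ℝ≥0∞)
    from rfl]
  rw [integral_withDensity_eq_integral_smul
    ((measurable_gaussianPDFReal 0 1).real_toNNReal) _]
  have hind : (fun x => Real.toNNReal (gaussianPDFReal 0 1 x) • max (Δ + σ * x) 0)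
      = Set.indicator (Set.Ici a) (fun x => Δ * stdNormalPDF x + σ * (x * stdNormalPDF x)) := by
    ext x
    rw [NNReal.smul_def, smul_eq_mul, Real.coe_toNNReal _ (gaussianPDFReal_nonneg 0 1 x),
      pdf_eq_std]
    by_cases hx : x ∈ Set.Ici a
    · rw [Set.indicator_of_mem hx]
      have hge : 0 ≤ Δ + σ * x := by
        have : a ≤ x := hx
        rw [ha] at this
        nlinarith [mul_le_mul_of_nonneg_left this (le_of_lt hσ), mul_div_cancel₀ Δ (ne_of_gt hσ)]
      rw [max_eq_left hge]; ring
    · rw [Set.indicator_of_notMem hx]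
      have hlt : Δ + σ * x < 0 := by
        simp only [Set.mem_Ici, not_le] at hx
        rw [ha] at hx
        nlinarith [mul_div_cancel₀ Δ (ne_of_gt hσ)]
      rw [max_eq_right (le_of_lt hlt), mul_zero]
  rw [hind, integral_indicator measurableSet_Ici, integral_add
    ((integrable_std.const_mul Δ).integrableOn)
    ((integrable_mul_std.const_mul σ).integrableOn),
    integral_const_mul, integral_const_mul, integral_Ici_std, integral_Ici_mul_std]
  rw [ha, neg_neg]
  congr 2
  simp [stdNormalPDF]

end Helpers

/-- Proposition 2 of the paper: when the outer function `g(y) = wᵀy` is linear, the expected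
improvement for composite functions admits the closed form
`Δ·Φ(Δ/σ) + σ·φ(Δ/σ)` with `Δ = wᵀμ − f*` and `σ = ‖Cᵀw‖`. -/
theorem eicf_closed_form_linear (m : ℕ) (hm : 1 ≤ m)
    (μ : EuclideanSpace ℝ (Fin m)) (C : Matrix (Fin m) (Fin m) ℝ)
    (w : EuclideanSpace ℝ (Fin m)) (fstar : ℝ)
    (Δ σ : ℝ)
    (hΔ : Δ = inner ℝ w μ - fstar)
    (hσ : σ = ‖Matrix.toEuclideanLin Cᵀ w‖)
    (hσpos : 0 < σ) :
    ∫ z, max (inner ℝ w (μ + Matrix.toEuclideanLin C z) - fstar) 0 ∂ stdGaussianE m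
      = Δ * stdNormalCDF (Δ / σ) + σ * stdNormalPDF (Δ / σ) := by
  classical
  set v : Fin m → ℝ := Cᵀ.mulVec w with hv
  have happ : ∀ i, (Matrix.toEuclideanLin Cᵀ w) i = v i := fun i => rfl
  have hσ2 : σ ^ 2 = ∑ i, v i ^ 2 := by
    rw [hσ, EuclideanSpace.norm_eq, Real.sq_sqrt (by positivity)]
    refine Finset.sum_congr rfl fun i _ => ?_
    rw [happ, Real.norm_eq_abs, sq_abs]
  have hfun : ∀ z : EuclideanSpace ℝ (Fin m),
      (inner ℝ w (μ + Matrix.toEuclideanLin C z) : ℝ) - fstar = Δ + ∑ i, v i * z i := by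
    intro z
    rw [inner_add_right, hΔ]
    have hlin : (inner ℝ w (Matrix.toEuclideanLin C z) : ℝ) = ∑ i, v i * z i := by
      rw [PiLp.inner_apply]
      simp only [RCLike.inner_apply, starRingEnd_apply, star_trivial]
      have hTz : ∀ i, (Matrix.toEuclideanLin C z) i = C.mulVec z i := fun i => rfl
      simp_rw [hTz, hv]
      simp only [Matrix.mulVec_apply_eq_sum, Finset.mul_sum, Finset.sum_mul]
      rw [Finset.sum_comm]
      refine Finset.sum_congr rfl fun j _ => Finset.sum_congr rfl fun i _ => ?_
      rw [Matrix.transpose_apply]; ring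
    rw [hlin]; ring
  have hmap := pi_map_sum m v (NNReal.mk (σ^2) (sq_nonneg σ)) hσ2
  have hS : Measurable fun z : Fin m → ℝ => ∑ i, v i * z i := by fun_prop
  have hsm : ∀ ν : MeasureTheory.Measure ℝ,
      MeasureTheory.AEStronglyMeasurable (fun t : ℝ => max (Δ + t) 0) ν := fun ν =>
    ((continuous_const.add continuous_id).max continuous_const).aestronglyMeasurable
  calc ∫ z, max (inner ℝ w (μ + Matrix.toEuclideanLin C z) - fstar) 0 ∂ stdGaussianE m
      = ∫ z : Fin m → ℝ, max (Δ + ∑ i, v i * z i) 0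
          ∂(MeasureTheory.Measure.pi fun _ : Fin m => gaussianReal 0 1) := by
        unfold stdGaussianE
        rw [integral_map_equiv]
        exact MeasureTheory.integral_congr_ae
          (Filter.Eventually.of_forall fun z =>
            show max ((inner ℝ w (μ + Matrix.toEuclideanLin C (WithLp.toLp 2 z)) : ℝ) - fstar) 0
                = max (Δ + ∑ i, v i * z i) 0 by rw [hfun (WithLp.toLp 2 z)])
    _ = ∫ t, max (Δ + t) 0 ∂(gaussianReal 0 (NNReal.mk (σ^2) (sq_nonneg σ))) := by
        rw [← hmap]
        exact (MeasureTheory.integral_map hS.aemeasurable (hsm _)).symm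
    _ = ∫ x, max (Δ + σ * x) 0 ∂(gaussianReal 0 1) := by
        have h := gaussianReal_map_const_mul (μ := 0) (v := 1) σ
        rw [mul_zero, mul_one] at h
        rw [← h, MeasureTheory.integral_map (by fun_prop) (hsm _)]
    _ = Δ * stdNormalCDF (Δ / σ) + σ * stdNormalPDF (Δ / σ) := one_dim Δ σ hσpos
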